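/- Fix x ∈ (0,1), n ≥ 3, α > 0, and let T ~ Gamma(n, α), b = ln(2x-x²) < 0, A = (n-1)(2-2x)/(2x-x²). Then E[A(T+b)^{n-2}/T^{n-1} · 1{T > -b}] = α(2-2x)(2x-x²)^{α-1}, i.e., the estimator f̃(x) = (n-1)(2-2x)(T + ln(2x-x²))^{n-2}/((2x-x²) T^{n-1}) (taken as 0 when T ≤ -b) is unbiased for the Topp-Leone density f(x). -/

import Mathlib

open MeasureTheory Set

theorem umvue_pdf_unbiased (n : ℕ) (hn : 3 ≤ n) (α x : ℝ) (hα : 0 < α)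
    (hx : x ∈ Ioo (0:ℝ) 1) :
    (∫ t in Ioi (-(Real.log (2*x - x^2))),
        (((n:ℝ) - 1) * (2 - 2*x) / (2*x - x^2))
            * (t + Real.log (2*x - x^2)) ^ (n-2) / t ^ (n-1)
          * (α^n * t^(n-1) * Real.exp (-α * t) / Real.Gamma n))
      = α * (2 - 2*x) * (2*x - x^2) ^ (α - 1) := by
  obtain ⟨hx0, hx1⟩ := hx
  set c : ℝ := 2*x - x^2 with hc
  have hc0 : 0 < c := by nlinarith
  have hc1 : c < 1 := by nlinarith
  set b : ℝ := Real.log c with hbdef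
  have hb : b < 0 := Real.log_neg hc0 hc1
  have hΓ : 0 < Real.Gamma (n:ℝ) := Real.Gamma_pos_of_pos (by positivity)
  set K : ℝ := ((n:ℝ) - 1) * (2 - 2*x) / c * (α^n / Real.Gamma n) with hK
  -- Step 1: simplify integrand on Ioi (-b)
  have step1 : (∫ t in Ioi (-b),
        (((n:ℝ) - 1) * (2 - 2*x) / c)
            * (t + b) ^ (n-2) / t ^ (n-1)
          * (α^n * t^(n-1) * Real.exp (-α * t) / Real.Gamma n))
      = ∫ t in Ioi (-b), K * ((t + b) ^ (n-2) * Real.exp (-α * t)) := by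
    refine setIntegral_congr_fun measurableSet_Ioi (fun t ht => ?_)
    have ht0 : 0 < t := lt_trans (by linarith) ht
    have htp : (t:ℝ) ^ (n-1) ≠ 0 := pow_ne_zero _ (ne_of_gt ht0)
    field_simp [hK]
    rw [hK]
    field_simp
  rw [step1, integral_const_mul]
  -- Step 2: translation t = s - b
  have step2 : (∫ t in Ioi (-b), (t + b) ^ (n-2) * Real.exp (-α * t))
      = ∫ s in Ioi (0:ℝ), s ^ (n-2) * Real.exp (-α * (s - b)) := by
    have h := (measurePreserving_add_right volume b).setIntegral_preimage_emb
      (measurableEmbedding_addRight b)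
      (fun s => s ^ (n-2) * Real.exp (-α * (s - b))) (Ioi 0)
    have hpre : (fun t : ℝ => t + b) ⁻¹' Ioi 0 = Ioi (-b) := by
      ext t; simp [neg_lt_iff_pos_add, add_comm]
    rw [hpre] at h
    rw [← h]
    refine setIntegral_congr_fun measurableSet_Ioi (fun t ht => ?_)
    simp
  rw [step2]
  -- Step 3: pull out exp(α b) and compute Gamma integral
  have step3 : (∫ s in Ioi (0:ℝ), s ^ (n-2) * Real.exp (-α * (s - b)))
      = Real.exp (α * b) * ((1/α) ^ ((n:ℝ) - 1) * Real.Gamma ((n:ℝ) - 1)) := by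
    have key : (∫ s in Ioi (0:ℝ), s ^ (((n:ℝ) - 1) - 1) * Real.exp (-(α * s)))
        = (1/α) ^ ((n:ℝ) - 1) * Real.Gamma ((n:ℝ) - 1) :=
      Real.integral_rpow_mul_exp_neg_mul_Ioi (by
        have : (3:ℝ) ≤ (n:ℝ) := by exact_mod_cast hn
        linarith) hα
    rw [← key, ← integral_const_mul]
    refine setIntegral_congr_fun measurableSet_Ioi (fun s hs => ?_)
    have hs0 : (0:ℝ) < s := hs
    have hcast : ((n:ℝ) - 1) - 1 = ((n - 2 : ℕ) : ℝ) := by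
      have : (3:ℕ) ≤ n := hn
      push_cast [Nat.cast_sub (by omega : 2 ≤ n)]
      ring
    rw [hcast, Real.rpow_natCast]
    rw [mul_comm (Real.exp (α * b)), mul_assoc, ← Real.exp_add]
    ring_nf
  rw [step3]
  -- Step 4: algebra
  have hexp : Real.exp (α * b) = c ^ α := by
    rw [hbdef, Real.rpow_def_of_pos hc0, mul_comm]
  have hΓ' : Real.Gamma (n:ℝ) = ((n:ℝ) - 1) * Real.Gamma ((n:ℝ) - 1) := by
    have : (n:ℝ) = ((n:ℝ) - 1) + 1 := by ring
    rw [this, Real.Gamma_add_one (by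
      have : (3:ℝ) ≤ (n:ℝ) := by exact_mod_cast hn
      intro h; rw [sub_eq_zero] at h; linarith)]
    norm_num
  have hpow : (1/α : ℝ) ^ ((n:ℝ) - 1) = (1/α) ^ (n - 1 : ℕ) := by
    have : ((n:ℝ) - 1) = ((n - 1 : ℕ) : ℝ) := by
      push_cast [Nat.cast_sub (by omega : 1 ≤ n)]; ring
    rw [this, Real.rpow_natCast]
  have hcα : c ^ (α - 1) = c ^ α / c := by
    rw [Real.rpow_sub hc0, Real.rpow_one]
  have hαn : α ^ n = α ^ (n-1) * α := by
    rw [← pow_succ]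
    congr 1
    omega
  rw [hK, hexp, hpow, hΓ', hαn, hcα]
  have hn1 : ((n:ℝ) - 1) ≠ 0 := by
    have : (3:ℝ) ≤ (n:ℝ) := by exact_mod_cast hn
    intro h; rw [sub_eq_zero] at h; linarith
  have hΓ1 : Real.Gamma ((n:ℝ) - 1) ≠ 0 := by
    refine ne_of_gt (Real.Gamma_pos_of_pos ?_)
    have : (3:ℝ) ≤ (n:ℝ) := by exact_mod_cast hn
    linarith
  field_simp
  ring
  rw [← mul_pow, mul_inv_cancel₀ hα.ne', one_pow]
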